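/- For every natural number n and every real x with 0 ≤ x: the series ∑_{k=0}^{∞} (x/(x+1))^k * k^n converges and w_n(x) = (1/(x+1)) * ∑_{k=0}^{∞} (x/(x+1))^k * k^n, where w_n(x) = ∑_{k=0}^{n} k! * S(n,k) * x^k. -/

import Mathlib

open Finset

def stirling2 : ℕ → ℕ → ℕ
  | 0, 0 => 1
  | 0, _ + 1 => 0
  | _ + 1, 0 => 0
  | n + 1, k + 1 => (k + 1) * stirling2 n (k + 1) + stirling2 n k

noncomputable def w (n : ℕ) (x : ℝ) : ℝ :=
  ∑ k ∈ range (n + 1), (k.factorial : ℝ) * (stirling2 n k : ℝ) * x ^ k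

lemma stirling2_eq_zero : ∀ n j : ℕ, n < j → stirling2 n j = 0 := by
  intro n
  induction n with
  | zero =>
    intro j h
    match j, h with
    | j + 1, _ => rfl
  | succ n ih =>
    intro j h
    match j, h with
    | j + 1, h =>
      show (j + 1) * stirling2 n (j + 1) + stirling2 n j = 0
      rw [ih (j + 1) (by omega), ih j (by omega)]
      ring

lemma choose_step (k j : ℕ) : k * k.choose j = j * k.choose j + (j + 1) * k.choose (j + 1) := by
  rcases le_or_gt j k with h | h
  · have h1 : k.choose (j + 1) * (j + 1) = k.choose j * (k - j) := Nat.choose_succ_right_eq k j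
    have : j + (k - j) = k := by omega
    nlinarith [h1, this]
  · rw [Nat.choose_eq_zero_of_lt h, Nat.choose_eq_zero_of_lt (by omega : k < j + 1)]
    ring

lemma keyA : ∀ (n k : ℕ), k ^ n = ∑ j ∈ range (n + 1), j.factorial * stirling2 n j * k.choose j := by
  intro n
  induction n with
  | zero => intro k; simp [stirling2]
  | succ n ih =>
    intro k
    have h1 : k ^ (n + 1) = ∑ j ∈ range (n + 1),
        (j.factorial * stirling2 n j * (j * k.choose j)
          + j.factorial * stirling2 n j * ((j + 1) * k.choose (j + 1))) := by
      rw [pow_succ, ih, Finset.sum_mul]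
      refine Finset.sum_congr rfl fun j _ => ?_
      rw [mul_assoc, mul_comm (k.choose j) k, choose_step k j]
      ring
    rw [h1, Finset.sum_add_distrib]
    have hA : ∑ j ∈ range (n + 1), j.factorial * stirling2 n j * (j * k.choose j)
        = ∑ j ∈ range n, (j + 1).factorial * stirling2 n (j + 1) * ((j + 1) * k.choose (j + 1)) := by
      rw [Finset.sum_range_succ']
      simp
    have hT : ∑ j ∈ range (n + 1 + 1), j.factorial * stirling2 (n + 1) j * k.choose j
        = ∑ j ∈ range (n + 1), (j + 1).factorial * stirling2 (n + 1) (j + 1) * k.choose (j + 1) := by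
      rw [Finset.sum_range_succ']
      simp [stirling2]
    rw [hT, hA]
    have hsplit : ∀ j ∈ range (n + 1), (j + 1).factorial * stirling2 (n + 1) (j + 1) * k.choose (j + 1)
        = (j + 1).factorial * stirling2 n (j + 1) * ((j + 1) * k.choose (j + 1))
          + j.factorial * stirling2 n j * ((j + 1) * k.choose (j + 1)) := by
      intro j _
      show (j + 1).factorial * ((j + 1) * stirling2 n (j + 1) + stirling2 n j) * k.choose (j + 1) = _
      rw [Nat.factorial_succ]
      ring
    rw [Finset.sum_congr rfl hsplit]
    conv_rhs => rw [Finset.sum_add_distrib, Finset.sum_range_succ,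
      stirling2_eq_zero n (n + 1) (by omega)]
    simp

theorem stmt17 (n : ℕ) (x : ℝ) (hx : 0 ≤ x) :
    Summable (fun k : ℕ => (x / (x + 1)) ^ k * (k : ℝ) ^ n) ∧
      w n x = (1 / (x + 1)) * ∑' k : ℕ, (x / (x + 1)) ^ k * (k : ℝ) ^ n := by
  have hx1 : (0 : ℝ) < x + 1 := by linarith
  set t : ℝ := x / (x + 1) with ht
  have ht0 : 0 ≤ t := div_nonneg hx (le_of_lt hx1)
  have ht1 : t < 1 := (div_lt_one hx1).mpr (by linarith)
  have htn : ‖t‖ < 1 := by rwa [Real.norm_eq_abs, abs_of_nonneg ht0]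
  have h1t : 1 - t = 1 / (x + 1) := by
    rw [ht]
    field_simp
    ring
  -- HasSum for each choose series
  have hchoose : ∀ j : ℕ, HasSum (fun k : ℕ => (k.choose j : ℝ) * t ^ k) (x ^ j * (x + 1)) := by
    intro j
    have h1 := (hasSum_choose_mul_geometric_of_norm_lt_one j htn).mul_right (t ^ j)
    have h2 : HasSum (fun k : ℕ => ((k + j).choose j : ℝ) * t ^ (k + j))
        (1 / (1 - t) ^ (j + 1) * t ^ j) := by
      simpa only [pow_add, mul_assoc] using h1
    have h3 := (hasSum_nat_add_iff (f := fun k : ℕ => (k.choose j : ℝ) * t ^ k) j).mp h2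
    have h4 : ∑ i ∈ range j, (i.choose j : ℝ) * t ^ i = 0 := by
      refine Finset.sum_eq_zero fun i hi => ?_
      rw [Nat.choose_eq_zero_of_lt (Finset.mem_range.mp hi)]
      simp
    rw [h4, add_zero] at h3
    have h5 : 1 / (1 - t) ^ (j + 1) * t ^ j = x ^ j * (x + 1) := by
      rw [h1t, ht]
      rw [div_pow, div_pow, one_pow]
      field_simp
      ring
    rwa [h5] at h3
  have H : HasSum (fun k : ℕ => t ^ k * (k : ℝ) ^ n) ((x + 1) * w n x) := by
    have h6 : HasSum (fun k : ℕ => ∑ j ∈ range (n + 1),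
        ((j.factorial : ℝ) * (stirling2 n j : ℝ)) * ((k.choose j : ℝ) * t ^ k))
        (∑ j ∈ range (n + 1), ((j.factorial : ℝ) * (stirling2 n j : ℝ)) * (x ^ j * (x + 1))) :=
      hasSum_sum fun j _ => (hchoose j).mul_left _
    convert h6 using 1
    · funext k
      have := keyA n k
      have hcast : ((k : ℝ)) ^ n = ∑ j ∈ range (n + 1),
          ((j.factorial : ℝ) * (stirling2 n j : ℝ)) * (k.choose j : ℝ) := by
        rw [← Nat.cast_pow, this]
        push_cast
        ring_nf
      rw [hcast, Finset.mul_sum]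
      refine Finset.sum_congr rfl fun j _ => ?_
      ring
    · rw [w, Finset.mul_sum]
      refine Finset.sum_congr rfl fun j _ => ?_
      ring
  refine ⟨H.summable, ?_⟩
  rw [H.tsum_eq]
  field_simp
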